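/- arXiv:2211.08696 — 2 statements merged into one kernel-verified Lean document; each statement's English description precedes it below -/
import Mathlib

section
/- Let χ be a primitive Dirichlet character modulo q with χ(-1) = 1, and let f : [0,1] → ℝ be a continuous function whose Fourier series converges to f pointwise. Then ∑_{k=1}^{q-1} χ(k) f(k/q) = 2τ(χ) ∑_{n=1}^{∞} conj(χ)(n) ∫_0^1 f(t) cos(2πnt) dt. -/
open Complex Finset intervalIntegral

theorem char_sum_formula_even (q : ℕ) (hq : 2 ≤ q) (χ : DirichletCharacter ℂ q)
    (hχ : χ.IsPrimitive) (heven : χ (-1) = 1) (f : ℝ → ℝ)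
    (hf : ContinuousOn f (Set.Icc 0 1))
    (hFourier : ∀ x ∈ Set.Icc (0:ℝ) 1,
      HasSum (fun n : ℤ =>
        (∫ t in (0:ℝ)..1, (f t : ℂ) * Complex.exp (-(2 * Real.pi * Complex.I * n * t))) *
          Complex.exp (2 * Real.pi * Complex.I * n * x)) (f x)) :
    ∑ k ∈ Finset.Icc 1 (q - 1), χ (k : ZMod q) * ((f (k / q) : ℂ)) =
      2 * (∑ k ∈ Finset.Icc 1 (q - 1), χ (k : ZMod q) *
          Complex.exp (2 * Real.pi * Complex.I * k / q)) *
        ∑' n : ℕ+, (starRingEnd ℂ) (χ ((n : ℕ) : ZMod q)) *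
          ((∫ t in (0:ℝ)..1, f t * Real.cos (2 * Real.pi * n * t) : ℝ) : ℂ) := by
  haveI : NeZero q := ⟨by omega⟩
  haveI : Fact (1 < q) := ⟨hq⟩
  have hq0 : (q : ℝ) ≠ 0 := Nat.cast_ne_zero.mpr (by omega)
  have hχ0 : χ 0 = 0 := χ.map_nonunit not_isUnit_zero
  -- conversion of sums over `ZMod q` to sums over `Icc 1 (q-1)`
  have hconv : ∀ F : ZMod q → ℂ, F 0 = 0 →
      ∑ x : ZMod q, F x = ∑ k ∈ Finset.Icc 1 (q - 1), F (k : ZMod q) := by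
    intro F h0
    have h1 : ∑ x : ZMod q, F x = ∑ k ∈ Finset.range q, F (k : ZMod q) := by
      refine (Finset.sum_bij' (fun k _ => ((k : ℕ) : ZMod q)) (fun x _ => x.val)
        (fun a _ => Finset.mem_univ _) (fun x _ => Finset.mem_range.mpr x.val_lt)
        (fun a ha => ZMod.val_cast_of_lt (Finset.mem_range.mp ha))
        (fun x _ => ZMod.natCast_zmod_val x) (fun a _ => rfl)).symm
    rw [h1]
    refine (Finset.sum_subset (fun k hk => ?_) (fun k hk hk' => ?_)).symm
    · simp only [Finset.mem_Icc] at hk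
      exact Finset.mem_range.mpr (by omega)
    · simp only [Finset.mem_Icc, Finset.mem_range] at hk hk'
      have : k = 0 := by omega
      simpa [this] using h0
  set ψ : AddChar (ZMod q) ℂ := ZMod.stdAddChar with hψ
  set τ : ℂ := ∑ k ∈ Finset.Icc 1 (q - 1), χ (k : ZMod q) *
      Complex.exp (2 * Real.pi * Complex.I * k / q) with hτdef
  have hτ : τ = gaussSum χ ψ := by
    rw [hτdef, gaussSum, hconv (fun x => χ x * ψ x) (by simp [hχ0])]
    refine Finset.sum_congr rfl fun k _ => ?_
    congr 1
    have : ((k : ℕ) : ZMod q) = ((k : ℤ) : ZMod q) := by push_cast; ring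
    rw [this, hψ, ZMod.stdAddChar_coe]
    norm_num
  -- Gauss sum evaluation
  have hS : ∀ n : ℤ, (∑ k ∈ Finset.Icc 1 (q - 1),
      χ (k : ZMod q) * Complex.exp (2 * Real.pi * Complex.I * n * (((k : ℝ) / q : ℝ) : ℂ)))
      = (starRingEnd ℂ) (χ ((n : ℤ) : ZMod q)) * τ := by
    intro n
    have hstar : (starRingEnd ℂ) (χ ((n : ℤ) : ZMod q)) = χ⁻¹ ((n : ℤ) : ZMod q) :=
      MulChar.star_apply' χ _
    rw [hstar, hτ, ← gaussSum_mulShift_of_isPrimitive ψ hχ ((n : ℤ) : ZMod q), gaussSum,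
      hconv (fun x => χ x * (ψ.mulShift _) x) (by simp [hχ0])]
    refine Finset.sum_congr rfl fun k _ => ?_
    congr 1
    rw [AddChar.mulShift_apply]
    have : ((n : ℤ) : ZMod q) * ((k : ℕ) : ZMod q) = (((n * k : ℤ)) : ZMod q) := by
      push_cast; ring
    rw [this, hψ, ZMod.stdAddChar_coe]
    congr 1
    push_cast
    field_simp
  -- Step 1 : summing the Fourier expansions over k
  set c : ℤ → ℂ := fun n =>
    ∫ t in (0:ℝ)..1, (f t : ℂ) * Complex.exp (-(2 * Real.pi * Complex.I * n * t)) with hc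
  set L : ℂ := ∑ k ∈ Finset.Icc 1 (q - 1), χ (k : ZMod q) * ((f (k / q) : ℂ)) with hL
  have hmem : ∀ k ∈ Finset.Icc 1 (q - 1), ((k : ℝ) / q) ∈ Set.Icc (0:ℝ) 1 := by
    intro k hk
    simp only [Finset.mem_Icc] at hk
    constructor
    · positivity
    · rw [div_le_one (by positivity)]
      exact_mod_cast Nat.le_of_lt_succ (by omega)
  have h1 : HasSum (fun n : ℤ => ∑ k ∈ Finset.Icc 1 (q - 1),
      χ (k : ZMod q) * (c n * Complex.exp (2 * Real.pi * Complex.I * n *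
        (((k : ℝ) / q : ℝ) : ℂ)))) L := by
    refine hasSum_sum fun k hk => ?_
    exact (hFourier _ (hmem k hk)).mul_left _
  have h2 : HasSum (fun n : ℤ => c n * ((starRingEnd ℂ) (χ ((n : ℤ) : ZMod q)) * τ)) L := by
    refine h1.congr_fun fun n => ?_
    rw [← hS n, Finset.mul_sum]
    exact Finset.sum_congr rfl fun k _ => by ring
  -- integral identities
  have hInt : ∀ n : ℕ, c n + c (-(n : ℤ)) =
      2 * ((∫ t in (0:ℝ)..1, f t * Real.cos (2 * Real.pi * n * t) : ℝ) : ℂ) := by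
    intro n
    have hfc : ContinuousOn (fun t => (f t : ℂ)) (Set.Icc (0:ℝ) 1) :=
      Complex.continuous_ofReal.comp_continuousOn hf
    have huI : Set.uIcc (0:ℝ) 1 = Set.Icc 0 1 := Set.uIcc_of_le zero_le_one
    have i1 : IntervalIntegrable
        (fun t : ℝ => (f t : ℂ) * Complex.exp (-(2 * Real.pi * Complex.I * n * t)))
        MeasureTheory.volume 0 1 := by
      apply ContinuousOn.intervalIntegrable
      rw [huI]
      exact hfc.mul (Continuous.continuousOn (by fun_prop))
    have i2 : IntervalIntegrable
        (fun t : ℝ => (f t : ℂ) * Complex.exp (2 * Real.pi * Complex.I * n * t))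
        MeasureTheory.volume 0 1 := by
      apply ContinuousOn.intervalIntegrable
      rw [huI]
      exact hfc.mul (Continuous.continuousOn (by fun_prop))
    have hcneg : c (-(n : ℤ)) =
        ∫ t in (0:ℝ)..1, (f t : ℂ) * Complex.exp (2 * Real.pi * Complex.I * n * t) := by
      rw [hc]
      refine intervalIntegral.integral_congr fun t _ => ?_
      push_cast
      ring_nf
    have hcn : c ((n : ℕ) : ℤ) =
        ∫ t in (0:ℝ)..1, (f t : ℂ) * Complex.exp (-(2 * Real.pi * Complex.I * n * t)) := by
      rw [hc]
      refine intervalIntegral.integral_congr fun t _ => ?_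
      push_cast
      ring_nf
    rw [hcn, hcneg, ← intervalIntegral.integral_add i1 i2]
    have key : ∀ t : ℝ, (f t : ℂ) * Complex.exp (-(2 * Real.pi * Complex.I * n * t)) +
        (f t : ℂ) * Complex.exp (2 * Real.pi * Complex.I * n * t) =
        2 * ((f t * Real.cos (2 * Real.pi * n * t) : ℝ) : ℂ) := by
      intro t
      have e3 : Complex.exp (-(2 * (Real.pi : ℂ) * Complex.I * n * t)) +
          Complex.exp (2 * (Real.pi : ℂ) * Complex.I * n * t) =
          2 * Complex.cos (((2 * Real.pi * n * t : ℝ) : ℂ)) := by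
        rw [Complex.two_cos,
          show ((2 * Real.pi * n * t : ℝ) : ℂ) * Complex.I =
            2 * (Real.pi : ℂ) * Complex.I * n * t by push_cast; ring,
          show (-((2 * Real.pi * n * t : ℝ) : ℂ)) * Complex.I =
            -(2 * (Real.pi : ℂ) * Complex.I * n * t) by push_cast; ring]
        ring
      rw [Complex.ofReal_mul, Complex.ofReal_cos]
      linear_combination (f t : ℂ) * e3
    rw [intervalIntegral.integral_congr (fun t _ => key t),
      intervalIntegral.integral_const_mul]
    congr 1
    exact intervalIntegral.integral_ofReal
  -- symmetrize
  have h3 := h2.nat_add_neg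
  simp only [Int.cast_zero, hχ0, map_zero, mul_zero, zero_mul, add_zero] at h3
  have h4 : HasSum (fun n : ℕ => 2 * τ * ((starRingEnd ℂ) (χ ((n : ℕ) : ZMod q)) *
      ((∫ t in (0:ℝ)..1, f t * Real.cos (2 * Real.pi * n * t) : ℝ) : ℂ))) L := by
    refine h3.congr_fun fun n => ?_
    have hcast : (((n : ℕ) : ℤ) : ZMod q) = ((n : ℕ) : ZMod q) := by push_cast; ring
    have hneg : χ (((-(n : ℤ)) : ℤ) : ZMod q) = χ ((n : ℕ) : ZMod q) := by
      have h : (((-(n : ℤ)) : ℤ) : ZMod q) = -1 * ((n : ℕ) : ZMod q) := by push_cast; ring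
      rw [h, map_mul, heven, one_mul]
    rw [hneg, hcast, ← add_mul, hInt n]
    ring
  -- restrict to positive naturals
  have h5 : HasSum (fun n : ℕ+ => 2 * τ * ((starRingEnd ℂ) (χ ((n : ℕ) : ZMod q)) *
      ((∫ t in (0:ℝ)..1, f t * Real.cos (2 * Real.pi * (n : ℕ) * t) : ℝ) : ℂ))) L := by
    refine (Function.Injective.hasSum_iff PNat.coe_injective fun n hn => ?_).mpr h4
    have hn0 : n = 0 := by
      by_contra h
      exact hn ⟨⟨n, Nat.pos_of_ne_zero h⟩, rfl⟩
    simp [hn0, hχ0]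
  rw [← tsum_mul_left, ← h5.tsum_eq]
end

section
/- Let χ be a primitive Dirichlet character modulo q with χ(-1) = -1, and let f : [0,1] → ℝ be a continuous function whose Fourier series converges to f pointwise. Then ∑_{k=1}^{q-1} χ(k) f(k/q) = -2i τ(χ) ∑_{n=1}^{∞} conj(χ)(n) ∫_0^1 f(t) sin(2πnt) dt. -/
open Complex Finset

private lemma helper0 (q : ℕ) [NeZero q] (hq : 2 ≤ q) (H : ZMod q → ℂ) (hH : H 0 = 0) :
    ∑ k ∈ Finset.Icc 1 (q-1), H (k : ZMod q) = ∑ x : ZMod q, H x := by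
  have h1 : ∑ k ∈ Finset.range q, H (k : ZMod q) = ∑ x : ZMod q, H x :=
    Finset.sum_nbij' (i := fun k => (k : ZMod q)) (j := ZMod.val)
      (fun k _ => Finset.mem_univ _)
      (fun x _ => Finset.mem_range.mpr (ZMod.val_lt x))
      (fun k hk => ZMod.val_cast_of_lt (Finset.mem_range.mp hk))
      (fun x _ => ZMod.natCast_zmod_val x)
      (fun k _ => rfl)
  have h2 : Finset.range q = insert 0 (Finset.Icc 1 (q-1)) := by
    ext k; simp only [Finset.mem_range, Finset.mem_insert, Finset.mem_Icc]; omega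
  rw [← h1, h2, Finset.sum_insert (by simp), Nat.cast_zero, hH, zero_add]

private lemma sin_helper (a : ℝ) :
    Complex.exp (-(((a:ℂ)) * Complex.I)) - Complex.exp ((a:ℂ) * Complex.I)
    = -2 * Complex.I * Real.sin a := by
  rw [Complex.ofReal_sin, Complex.sin]
  ring_nf
  rw [Complex.I_sq]
  ring

theorem char_sum_formula_odd (q : ℕ) (hq : 2 ≤ q) (χ : DirichletCharacter ℂ q)
    (hχ : χ.IsPrimitive) (hodd : χ (-1) = -1) (f : ℝ → ℝ)
    (hf : ContinuousOn f (Set.Icc 0 1))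
    (hFourier : ∀ x ∈ Set.Icc (0:ℝ) 1,
      HasSum (fun n : ℤ =>
        (∫ t in (0:ℝ)..1, (f t : ℂ) * Complex.exp (-(2 * Real.pi * Complex.I * n * t))) *
          Complex.exp (2 * Real.pi * Complex.I * n * x)) (f x)) :
    ∑ k ∈ Finset.Icc 1 (q - 1), χ (k : ZMod q) * ((f (k / q) : ℂ)) =
      -2 * Complex.I *
        (∑ k ∈ Finset.Icc 1 (q - 1), χ (k : ZMod q) *
          Complex.exp (2 * Real.pi * Complex.I * k / q)) *
        ∑' n : ℕ+, (starRingEnd ℂ) (χ ((n : ℕ) : ZMod q)) *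
          ((∫ t in (0:ℝ)..1, f t * Real.sin (2 * Real.pi * n * t) : ℝ) : ℂ) := by
  haveI : NeZero q := ⟨by omega⟩
  haveI : Fact (1 < q) := ⟨hq⟩
  set ψ : AddChar (ZMod q) ℂ := ZMod.stdAddChar with hψdef
  set τ : ℂ := gaussSum χ ψ with hτdef
  have hq0 : (0:ℝ) < q := by positivity
  have hχ0 : χ (0 : ZMod q) = 0 := χ.map_nonunit (by simp [isUnit_zero_iff])
  -- the Gauss sum identity for shifted characters
  have gauss : ∀ n : ZMod q, ∑ x : ZMod q, χ x * ψ (n * x)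
      = (starRingEnd ℂ) (χ n) * τ := by
    intro n
    have h1 : ∑ x : ZMod q, χ x * ψ (n * x) = gaussSum χ (ψ.mulShift n) := by
      simp [gaussSum, AddChar.mulShift_apply]
    rw [h1, gaussSum_mulShift_of_isPrimitive _ hχ n, ← MulChar.star_apply' χ n]
    rfl
  -- inner sums over k
  have inner : ∀ n : ℤ, ∑ k ∈ Finset.Icc 1 (q-1),
      χ (k : ZMod q) * Complex.exp (2 * Real.pi * Complex.I * n * (((k:ℝ) / q : ℝ) : ℂ))
      = (starRingEnd ℂ) (χ ((n:ℤ) : ZMod q)) * τ := by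
    intro n
    have key : ∀ k : ℕ, Complex.exp (2 * Real.pi * Complex.I * n * (((k:ℝ) / q : ℝ) : ℂ))
        = ψ (((n : ZMod q)) * (k : ZMod q)) := by
      intro k
      have := ZMod.stdAddChar_coe (N := q) (n * k)
      rw [show (((n * k : ℤ)) : ZMod q) = (n : ZMod q) * ((k:ℕ) : ZMod q) by push_cast; ring]
        at this
      rw [this]
      congr 1
      push_cast
      ring
    calc ∑ k ∈ Finset.Icc 1 (q-1),
        χ (k : ZMod q) * Complex.exp (2 * Real.pi * Complex.I * n * (((k:ℝ) / q : ℝ) : ℂ))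
        = ∑ k ∈ Finset.Icc 1 (q-1), χ (k : ZMod q) * ψ ((n : ZMod q) * (k : ZMod q)) := by
          exact Finset.sum_congr rfl fun k _ => by rw [key k]
      _ = ∑ x : ZMod q, χ x * ψ ((n : ZMod q) * x) :=
          helper0 q hq (fun x => χ x * ψ ((n : ZMod q) * x)) (by simp [hχ0])
      _ = (starRingEnd ℂ) (χ ((n:ℤ) : ZMod q)) * τ := gauss _
  -- the tau in the statement equals gaussSum
  have hT : ∑ k ∈ Finset.Icc 1 (q - 1), χ (k : ZMod q) *
      Complex.exp (2 * Real.pi * Complex.I * k / q) = τ := by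
    have key : ∀ k : ℕ, Complex.exp (2 * Real.pi * Complex.I * k / q)
        = ψ ((k : ZMod q)) := by
      intro k
      have := ZMod.stdAddChar_coe (N := q) (k : ℤ)
      rw [show (((k:ℤ)) : ZMod q) = ((k:ℕ) : ZMod q) by push_cast; ring] at this
      rw [this]
      norm_num
    rw [Finset.sum_congr rfl fun k _ => by rw [key k],
      helper0 q hq (fun x => χ x * ψ x) (by simp [hχ0])]
    rfl
  -- Fourier coefficients
  set c : ℤ → ℂ := fun n =>
    ∫ t in (0:ℝ)..1, (f t : ℂ) * Complex.exp (-(2 * Real.pi * Complex.I * n * t)) with hcdef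
  set g : ℤ → ℂ := fun n => (starRingEnd ℂ) (χ ((n:ℤ) : ZMod q)) * τ * c n with hgdef
  set S : ℂ := ∑ k ∈ Finset.Icc 1 (q - 1), χ (k : ZMod q) * ((f (k / q) : ℂ)) with hSdef
  have hgs : HasSum g S := by
    have hmem : ∀ k ∈ Finset.Icc 1 (q-1), ((k:ℝ)/q) ∈ Set.Icc (0:ℝ) 1 := by
      intro k hk
      rw [Finset.mem_Icc] at hk
      constructor
      · positivity
      · rw [div_le_one hq0]
        have hkq : k ≤ q := by omega
        exact_mod_cast hkq
    have hsum : HasSum (fun n : ℤ => ∑ k ∈ Finset.Icc 1 (q-1),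
        χ (k : ZMod q) * (c n * Complex.exp (2 * Real.pi * Complex.I * n
          * (((k:ℝ)/q : ℝ) : ℂ)))) S :=
      hasSum_sum fun k hk => (hFourier _ (hmem k hk)).mul_left _
    have : (fun n : ℤ => ∑ k ∈ Finset.Icc 1 (q-1),
        χ (k : ZMod q) * (c n * Complex.exp (2 * Real.pi * Complex.I * n
          * (((k:ℝ)/q : ℝ) : ℂ)))) = g := by
      funext n
      rw [hgdef]
      simp only
      rw [show (starRingEnd ℂ) (χ ((n:ℤ) : ZMod q)) * τ * c n
        = c n * ((starRingEnd ℂ) (χ ((n:ℤ) : ZMod q)) * τ) by ring, ← inner n,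
        Finset.mul_sum]
      exact Finset.sum_congr rfl fun k _ => by ring
    rwa [this] at hsum
  -- integrability
  have hfc : ∀ b : ℝ → ℂ, Continuous b →
      IntervalIntegrable (fun t => (f t : ℂ) * b t) MeasureTheory.volume 0 1 := by
    intro b hb
    apply ContinuousOn.intervalIntegrable
    rw [Set.uIcc_of_le zero_le_one]
    exact (Complex.continuous_ofReal.comp_continuousOn hf).mul hb.continuousOn
  -- pairing computation
  have pair : ∀ n : ℕ, g (n : ℤ) + g (-(n:ℤ)) =
      -2 * Complex.I * τ * ((starRingEnd ℂ) (χ ((n:ℕ) : ZMod q)) *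
        ((∫ t in (0:ℝ)..1, f t * Real.sin (2 * Real.pi * n * t) : ℝ) : ℂ)) := by
    intro n
    have hneg : (starRingEnd ℂ) (χ ((-(n:ℤ)) : ZMod q))
        = -(starRingEnd ℂ) (χ ((n:ℤ) : ZMod q)) := by
      rw [show ((-(n:ℤ)) : ZMod q) = (-1) * ((n:ℤ) : ZMod q) by push_cast; ring,
        map_mul, hodd]
      simp
    have hcsub : c (n:ℤ) - c (-(n:ℤ)) =
        -2 * Complex.I * ((∫ t in (0:ℝ)..1, f t * Real.sin (2 * Real.pi * n * t) : ℝ) : ℂ) := by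
      have i1 := hfc (fun t => Complex.exp (-(2 * Real.pi * Complex.I * (n:ℤ) * t)))
        (by fun_prop)
      have i2 := hfc (fun t => Complex.exp (-(2 * Real.pi * Complex.I * ((-(n:ℤ)):ℤ) * t)))
        (by fun_prop)
      rw [hcdef]
      simp only
      rw [← intervalIntegral.integral_sub i1 i2]
      have : (fun t : ℝ => (f t : ℂ) * Complex.exp (-(2 * Real.pi * Complex.I * (n:ℤ) * t))
          - (f t : ℂ) * Complex.exp (-(2 * Real.pi * Complex.I * ((-(n:ℤ)):ℤ) * t)))
          = fun t : ℝ => (-2 * Complex.I) *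
            ((f t * Real.sin (2 * Real.pi * n * t) : ℝ) : ℂ) := by
        funext t
        have e1 : -(2 * (Real.pi:ℂ) * Complex.I * ((n:ℤ):ℂ) * (t:ℂ))
            = -(((2 * Real.pi * n * t : ℝ):ℂ) * Complex.I) := by push_cast; ring
        have e2 : -(2 * (Real.pi:ℂ) * Complex.I * (((-(n:ℤ)):ℤ):ℂ) * (t:ℂ))
            = ((2 * Real.pi * n * t : ℝ):ℂ) * Complex.I := by push_cast; ring
        rw [e1, e2, ← mul_sub, sin_helper (2 * Real.pi * n * t)]
        push_cast
        ring
      rw [this, intervalIntegral.integral_const_mul, intervalIntegral.integral_ofReal]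
    rw [hgdef]
    simp only [Int.cast_neg]
    rw [hneg]
    rw [show ((starRingEnd ℂ) (χ (((n:ℕ):ℤ) : ZMod q)) * τ * c (n:ℤ) +
        -(starRingEnd ℂ) (χ (((n:ℕ):ℤ) : ZMod q)) * τ * c (-(n:ℤ)))
        = (starRingEnd ℂ) (χ (((n:ℕ):ℤ) : ZMod q)) * τ * (c (n:ℤ) - c (-(n:ℤ))) by ring,
      hcsub]
    push_cast
    ring
  -- sum over naturals
  have hg0 : g 0 = 0 := by
    rw [hgdef]; simp [hχ0]
  have hnat : HasSum (fun n : ℕ =>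
      -2 * Complex.I * τ * ((starRingEnd ℂ) (χ ((n:ℕ) : ZMod q)) *
        ((∫ t in (0:ℝ)..1, f t * Real.sin (2 * Real.pi * n * t) : ℝ) : ℂ))) S := by
    have h := hgs.nat_add_neg
    rw [hg0, add_zero] at h
    have : (fun n : ℕ => g (n:ℤ) + g (-(n:ℤ))) = fun n : ℕ =>
        -2 * Complex.I * τ * ((starRingEnd ℂ) (χ ((n:ℕ) : ZMod q)) *
          ((∫ t in (0:ℝ)..1, f t * Real.sin (2 * Real.pi * n * t) : ℝ) : ℂ)) :=
      funext fun n => pair n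
    rwa [this] at h
  -- move to ℕ+
  have hpnat : HasSum (fun n : ℕ+ =>
      -2 * Complex.I * τ * ((starRingEnd ℂ) (χ ((n:ℕ) : ZMod q)) *
        ((∫ t in (0:ℝ)..1, f t * Real.sin (2 * Real.pi * (n:ℕ) * t) : ℝ) : ℂ))) S := by
    apply (Function.Injective.hasSum_iff PNat.coe_injective ?_).mpr hnat
    intro x hx
    have hx0 : x = 0 := by
      by_contra h
      exact hx ⟨⟨x, Nat.pos_of_ne_zero h⟩, rfl⟩
    subst hx0
    simp [hχ0]
  rw [hT, ← tsum_mul_left]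
  exact hpnat.tsum_eq.symm
end
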